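/- The left normalizer of the left center of the right-symmetric Witt algebra W_n^+ over a field of characteristic 0 consists exactly of the vector fields with affine coefficients: a vector field a ∈ W_n^+ satisfies a ∘ z ∈ Z(W_n^+) for all z ∈ Z(W_n^+) if and only if every component polynomial a_i has total degree at most 1. -/

import Mathlib

/-- The multiplication of the right-symmetric Witt algebra `W_n^+`:
`(a ∘ b)_i = ∑ j, b_j * ∂_j (a_i)`. -/
noncomputable def wmul {K : Type*} [CommSemiring K] {n : ℕ}
    (a b : Fin n → MvPolynomial (Fin n) K) : Fin n → MvPolynomial (Fin n) K :=
  fun i => ∑ j, b j * MvPolynomial.pderiv j (a i)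

open MvPolynomial Finsupp in
lemma coeff_pderiv' {σ R : Type*} [DecidableEq σ] [CommSemiring R] (i : σ)
    (p : MvPolynomial σ R) (m : σ →₀ ℕ) :
    coeff m (pderiv i p) = (m i + 1) * coeff (m + single i 1) p := by
  induction p using MvPolynomial.induction_on' with
  | monomial s a =>
    rw [pderiv_monomial, coeff_monomial, coeff_monomial]
    split_ifs with h1 h2 h2
    · have : s i = m i + 1 := by subst h2; simp
      rw [this]; push_cast; ring
    · have hsi : s i = 0 := by
        by_contra hsi
        apply h2
        ext x
        have := DFunLike.congr_fun h1 x
        simp only [Finsupp.coe_tsub, Pi.sub_apply] at this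
        simp only [Finsupp.add_apply]
        rcases eq_or_ne x i with rfl | hx
        · simp at this ⊢; omega
        · simp [Finsupp.single_apply, Ne.symm hx] at this ⊢; omega
      simp [hsi]
    · exact absurd (by rw [h2]; exact add_tsub_cancel_right m (single i 1)) h1
    · ring
  | add p q hp hq => simp [hp, hq, mul_add]

open Finsupp in
lemma finsupp_split {σ : Type*} [DecidableEq σ] (s : σ →₀ ℕ) (k : σ) (h : s k ≠ 0) :
    (s - single k 1) + single k 1 = s := by
  ext x
  simp only [Finsupp.add_apply, Finsupp.coe_tsub, Pi.sub_apply]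
  rcases eq_or_ne x k with rfl | hx
  · simp; omega
  · simp [Finsupp.single_apply, Ne.symm hx]

open Finsupp in
lemma finsupp_sum_add_single {σ : Type*} [DecidableEq σ] (t : σ →₀ ℕ) (k : σ) :
    ((t + single k 1).sum fun _ e => e) = (t.sum fun _ e => e) + 1 := by
  rw [Finsupp.sum_add_index' (fun _ => rfl) (fun _ _ _ => rfl),
    Finsupp.sum_single_index rfl]

open MvPolynomial Finsupp in
lemma totalDegree_le_one_iff_pderiv {σ K : Type*} [DecidableEq σ] [Field K] [CharZero K]
    (p : MvPolynomial σ K) :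
    p.totalDegree ≤ 1 ↔ ∀ j k, pderiv j (pderiv k p) = 0 := by
  constructor
  · intro h j k
    ext m
    rw [coeff_zero, coeff_pderiv', coeff_pderiv']
    have hdeg : p.totalDegree < ((m + single j 1 + single k 1).sum fun _ e => e) := by
      rw [finsupp_sum_add_single, finsupp_sum_add_single]
      omega
    rw [coeff_eq_zero_of_totalDegree_lt hdeg, mul_zero, mul_zero]
  · intro h
    apply Finset.sup_le
    intro s hs
    by_contra hgt
    push_neg at hgt
    rw [MvPolynomial.mem_support_iff] at hs
    apply hs
    have hs0 : ∃ k, s k ≠ 0 := by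
      by_contra h0
      push_neg at h0
      have : s = 0 := by ext x; exact h0 x
      simp [this] at hgt
    obtain ⟨k, hk⟩ := hs0
    set t := s - single k 1 with ht
    have hts : t + single k 1 = s := finsupp_split s k hk
    have htsum : (t.sum fun _ e => e) + 1 = s.sum fun _ e => e := by
      rw [← hts, finsupp_sum_add_single]
    have ht0 : ∃ j, t j ≠ 0 := by
      by_contra h0
      push_neg at h0
      have : t = 0 := by ext x; exact h0 x
      rw [this] at htsum
      simp at htsum
      omega
    obtain ⟨j, hj⟩ := ht0
    set u := t - single j 1 with hu
    have hut : u + single j 1 = t := finsupp_split t j hj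
    have key := h j k
    have := congrArg (coeff u) key
    rw [coeff_zero, coeff_pderiv', coeff_pderiv', hut, hts] at this
    have h1 : ((u j : K) + 1) ≠ 0 := by
      have : ((u j + 1 : ℕ) : K) ≠ 0 := Nat.cast_ne_zero.mpr (by omega)
      push_cast at this; exact this
    have h2 : ((t k : K) + 1) ≠ 0 := by
      have : ((t k + 1 : ℕ) : K) ≠ 0 := Nat.cast_ne_zero.mpr (by omega)
      push_cast at this; exact this
    rcases mul_eq_zero.mp this with h' | h'
    · exact absurd h' h1
    rcases mul_eq_zero.mp h' with h'' | h''
    · exact absurd h'' h2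
    exact h''

/-- the left normalizer of the left center of `W_n^+` (char 0) consists
exactly of the vector fields with affine coefficients: `a ∘ z ∈ Z(W_n^+)` for all
`z ∈ Z(W_n^+)` iff every component `a_i` has total degree at most 1. -/
theorem wittRsym_normalizer_of_center {K : Type*} [Field K] [CharZero K] {n : ℕ} (hn : 1 ≤ n)
    (a : Fin n → MvPolynomial (Fin n) K) :
    (∀ z : Fin n → MvPolynomial (Fin n) K,
        (∀ b : Fin n → MvPolynomial (Fin n) K, wmul z b = 0) →
        ∀ b : Fin n → MvPolynomial (Fin n) K, wmul (wmul a z) b = 0) ↔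
      ∀ i, (a i).totalDegree ≤ 1 := by
  classical
  constructor
  · intro H i
    rw [totalDegree_le_one_iff_pderiv]
    intro j k
    set z : Fin n → MvPolynomial (Fin n) K := fun j' => if j' = k then 1 else 0 with hz
    have hzc : ∀ b : Fin n → MvPolynomial (Fin n) K, wmul z b = 0 := by
      intro b
      funext i'
      simp only [wmul, hz]
      apply Finset.sum_eq_zero
      intro j' _
      refine mul_eq_zero_of_right _ ?_
      split <;> simp
    have h1 : wmul a z i = MvPolynomial.pderiv k (a i) := by
      simp only [wmul, hz]
      rw [Finset.sum_eq_single k]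
      · simp
      · intro j' _ h; simp [h]
      · intro h; exact absurd (Finset.mem_univ k) h
    have h2 := congrFun (H z hzc (fun j' => if j' = j then 1 else 0)) i
    simp only [wmul, Pi.zero_apply] at h2
    rw [Finset.sum_eq_single j] at h2
    · rw [← h1]
      simpa [wmul] using h2
    · intro j' _ h; simp [h]
    · intro h; exact absurd (Finset.mem_univ j) h
  · intro H z hzc b
    have hzconst : ∀ i k, MvPolynomial.pderiv k (z i) = 0 := by
      intro i k
      have := congrFun (hzc fun j' => if j' = k then 1 else 0) i
      simp only [wmul, Pi.zero_apply] at this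
      rw [Finset.sum_eq_single k] at this
      · simpa using this
      · intro j' _ h; simp [h]
      · intro h; exact absurd (Finset.mem_univ k) h
    have hsecond : ∀ i j k, MvPolynomial.pderiv j (MvPolynomial.pderiv k (a i)) = 0 :=
      fun i => (totalDegree_le_one_iff_pderiv (a i)).mp (H i)
    funext i
    simp only [wmul, Pi.zero_apply]
    apply Finset.sum_eq_zero
    intro j _
    have : MvPolynomial.pderiv j (∑ k, z k * MvPolynomial.pderiv k (a i)) = 0 := by
      rw [map_sum]
      apply Finset.sum_eq_zero
      intro k _
      rw [MvPolynomial.pderiv_mul, hzconst k j, hsecond i j k]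
      simp
    rw [this, mul_zero]
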